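/- The linear map Cl(V,q) → ⋀V given by a ↦ a • 1, where • denotes the Clifford module action on the exterior algebra via ι + o, is an isomorphism of vector spaces. In particular, dim Cl(V,q) = 2^{dim V}. -/

import Mathlib

open CliffordAlgebra

/-- The bilinear form associated to `q`: `(v|w) = ½(q(v+w) − q(v) − q(w))`. -/
noncomputable def halfPolar {K V : Type*} [Field K] [CharZero K] [AddCommGroup V] [Module K V]
    (q : QuadraticForm K V) : V →ₗ[K] Module.Dual K V :=
  (2⁻¹ : K) • (QuadraticMap.polarBilin q)

open Module in
private lemma finrank_clifford_zero (K : Type*) [Field K] :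
    ∀ (n : ℕ) (V : Type*) [AddCommGroup V] [Module K V] [FiniteDimensional K V],
      finrank K V = n → finrank K (CliffordAlgebra (0 : QuadraticForm K V)) = 2 ^ n := by
  intro n
  induction n with
  | zero =>
    intro V _ _ _ h
    haveI : Subsingleton V := (Module.finrank_zero_iff (R := K)).mp h
    let e : V ≃ₗ[K] Unit :=
      { toFun := fun _ => (), invFun := fun _ => 0,
        map_add' := fun _ _ => rfl, map_smul' := fun _ _ => rfl,
        left_inv := fun x => Subsingleton.elim _ _, right_inv := fun _ => rfl }
    let iso : QuadraticMap.IsometryEquiv (0 : QuadraticForm K V) (0 : QuadraticForm K Unit) :=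
      { e with map_app' := fun _ => rfl }
    rw [(CliffordAlgebra.equivOfIsometry iso).toLinearEquiv.finrank_eq,
      (CliffordAlgebraRing.equiv (R := K)).toLinearEquiv.finrank_eq]
    simp
  | succ n ih =>
    intro V _ _ _ h
    haveI : Nontrivial V := Module.nontrivial_of_finrank_pos (R := K) (by omega)
    obtain ⟨v, hv⟩ := exists_ne (0 : V)
    obtain ⟨W, hW⟩ := Submodule.exists_isCompl (K ∙ v)
    have hL : finrank K (K ∙ v) = 1 := finrank_span_singleton hv
    have hWn : finrank K W = n := by
      have := Submodule.finrank_add_eq_of_isCompl hW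
      omega
    let e : (K × W) ≃ₗ[K] V :=
      ((LinearEquiv.toSpanNonzeroSingleton K V v hv).prodCongr (LinearEquiv.refl K W)).trans
        (Submodule.prodEquivOfIsCompl _ W hW)
    let iso : QuadraticMap.IsometryEquiv
        ((0 : QuadraticForm K K).prod (0 : QuadraticForm K W)) (0 : QuadraticForm K V) :=
      { e with map_app' := fun m => by simp }
    rw [(CliffordAlgebra.equivOfIsometry iso.symm).toLinearEquiv.finrank_eq,
      (CliffordAlgebra.prodEquiv (0 : QuadraticForm K K) (0 : QuadraticForm K W)).toLinearEquiv.finrank_eq,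
      (GradedTensorProduct.of K (evenOdd (0 : QuadraticForm K K))
        (evenOdd (0 : QuadraticForm K W))).symm.finrank_eq,
      Module.finrank_tensorProduct]
    have h2 : finrank K (CliffordAlgebra (0 : QuadraticForm K K)) = 2 := by
      rw [(CliffordAlgebraDualNumber.equiv (R := K)).toLinearEquiv.finrank_eq]
      show finrank K (K × K) = 2
      simp [Module.finrank_prod]
    rw [h2, ih W hWn]
    ring

/-- the linear map `Cl(V,q) → ⋀V`, `a ↦ a • 1`, where `•` is the Clifford
module action on the exterior algebra via `v ↦ ι(v) + o(v)`, is an isomorphism of vector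
spaces; in particular `dim Cl(V,q) = 2 ^ dim V`.  Here `φ` is the algebra homomorphism
`Cl(V,q) → End(⋀V)` extending `v ↦ ι(v) + o(v)`. -/
theorem stmt1 {K V : Type*} [Field K] [CharZero K]
    [AddCommGroup V] [Module K V] [FiniteDimensional K V] (q : QuadraticForm K V)
    (φ : CliffordAlgebra q →ₐ[K] Module.End K (ExteriorAlgebra K V))
    (hφ : ∀ v : V, φ (ι q v) =
      LinearMap.mulLeft K (ExteriorAlgebra.ι K v)
        + contractLeft (Q := (0 : QuadraticForm K V)) (halfPolar q v)) :
    Function.Bijective (fun a : CliffordAlgebra q => φ a 1) ∧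
    Module.finrank K (CliffordAlgebra q) = 2 ^ Module.finrank K V := by
  have hB : LinearMap.BilinMap.toQuadraticMap (-(halfPolar q))
      = (0 : QuadraticForm K V) - q := by
    ext v
    simp [halfPolar, LinearMap.BilinMap.toQuadraticMap_apply, QuadraticMap.polar_self,
      smul_eq_mul]
  have key : ∀ a : CliffordAlgebra q, φ a 1 = changeForm hB a := by
    intro a
    induction a using CliffordAlgebra.left_induction with
    | algebraMap r =>
      rw [AlgHom.commutes, changeForm_algebraMap, Module.algebraMap_end_apply,
        Algebra.algebraMap_eq_smul_one]
    | add x y hx hy =>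
      rw [map_add, map_add, LinearMap.add_apply, hx, hy]
    | ι_mul m x hx =>
      rw [map_mul, Module.End.mul_apply, hφ, changeForm_ι_mul, LinearMap.add_apply,
        LinearMap.mulLeft_apply, hx, LinearMap.neg_apply, map_neg, LinearMap.neg_apply,
        sub_neg_eq_add]
  have hfun : (fun a : CliffordAlgebra q => φ a 1) = ⇑(changeFormEquiv hB) := by
    funext a; exact key a
  constructor
  · rw [hfun]
    exact (changeFormEquiv hB).bijective
  · rw [(changeFormEquiv hB).finrank_eq]
    exact finrank_clifford_zero K (Module.finrank K V) V rfl
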